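/- Exact active-set prediction: let ψ_p = inf over primal optimal solutions x* of min{x*_i : x*_i > 0} and assume ψ_p > 0. Set C = ψ_p/2 and fix λ with 0 < ‖λ‖ < min(1, ψ_p/(16 max(τ_p,τ_d))). Let (x,y,s) ∈ N̄(γ,λ) with μ_λ < min(1, (ψ_p/(4 max(τ_p,τ_d) C₂))²). Then there exists an optimal solution (x*,y*,s*) of the original QP such that {i : x_i < C} = {i : x*_i = 0}. -/

import Mathlib

open Matrix

/-- Euclidean norm of a finite real vector. -/
noncomputable def enorm {ι : Type*} [Fintype ι] (v : ι → ℝ) : ℝ :=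
  Real.sqrt (∑ i, v i ^ 2)

/-- Perturbed duality measure `μ_λ = (x+λ)ᵀ(s+λ)/n`. -/
noncomputable def muLam {n : ℕ} (lam x s : Fin n → ℝ) : ℝ :=
  (∑ i, (x i + lam i) * (s i + lam i)) / n

/-- Membership in the symmetric neighbourhood `N̄(γ, λ)` of the perturbed
central path. -/
def InSymNbhd {m n : ℕ} (H : Matrix (Fin n) (Fin n) ℝ)
    (A : Matrix (Fin m) (Fin n) ℝ) (b : Fin m → ℝ) (c : Fin n → ℝ)
    (γ : ℝ) (lam x s : Fin n → ℝ) (y : Fin m → ℝ) : Prop :=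
  A.mulVec x = b ∧ Aᵀ.mulVec y + s - H.mulVec x = c ∧
  (∀ i, 0 < x i + lam i) ∧ (∀ i, 0 < s i + lam i) ∧
  ∀ i, γ * muLam lam x s ≤ (x i + lam i) * (s i + lam i) ∧
    (x i + lam i) * (s i + lam i) ≤ muLam lam x s / γ

/-- The KKT conditions of the original QP. -/
def KKT {m n : ℕ} (H : Matrix (Fin n) (Fin n) ℝ) (A : Matrix (Fin m) (Fin n) ℝ)
    (b : Fin m → ℝ) (c : Fin n → ℝ)
    (xs : Fin n → ℝ) (ys : Fin m → ℝ) (ss : Fin n → ℝ) : Prop :=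
  A.mulVec xs = b ∧ Aᵀ.mulVec ys + ss - H.mulVec xs = c ∧
  (∀ i, xs i * ss i = 0) ∧ 0 ≤ xs ∧ 0 ≤ ss

/-- `C₂ = √(n/γ) + n`. -/
noncomputable def C2 (n : ℕ) (γ : ℝ) : ℝ := Real.sqrt (n / γ) + n

/-- The proximity bound `C₂ √μ_λ max(√μ_λ, 1) + 4‖λ‖ max(‖λ‖, 1)`. -/
noncomputable def proxBound {n : ℕ} (γ : ℝ) (lam x s : Fin n → ℝ) : ℝ :=
  C2 n γ * Real.sqrt (muLam lam x s) * max (Real.sqrt (muLam lam x s)) 1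
    + 4 * _root_.enorm lam * max (_root_.enorm lam) 1

lemma abs_apply_le_enorm {ι : Type*} [Fintype ι] (v : ι → ℝ) (i : ι) :
    |v i| ≤ _root_.enorm v := by
  rw [_root_.enorm, ← Real.sqrt_sq_eq_abs]
  exact Real.sqrt_le_sqrt (Finset.single_le_sum (fun j _ => sq_nonneg (v j)) (Finset.mem_univ i))

/-- Exact active-set prediction: let `ψ_p` be the infimum, over primal optimal
solutions `x*` and indices `i` with `x*ᵢ > 0`, of `x*ᵢ`; assume `ψ_p > 0`.
Set `C = ψ_p/2`, fix `λ` with `0 < ‖λ‖ < min(1, ψ_p/(16 max(τ_p,τ_d)))`, and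
let `(x,y,s) ∈ N̄(γ,λ)` with `μ_λ < min(1, (ψ_p/(4 max(τ_p,τ_d) C₂))²)`.
Then there is an optimal solution `(x*,y*,s*)` of the original QP with
`{i : xᵢ < C} = {i : x*ᵢ = 0}`. -/
theorem exact_active_set_prediction {m n : ℕ}
    (H : Matrix (Fin n) (Fin n) ℝ) (A : Matrix (Fin m) (Fin n) ℝ)
    (b : Fin m → ℝ) (c : Fin n → ℝ) (hH : H.PosSemidef)
    (γ : ℝ) (hγ : γ ∈ Set.Ioo (0 : ℝ) 1)
    (τp τd : ℝ) (hτp : 0 < τp) (hτd : 0 < τd)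
    (ψp : ℝ)
    (hψp : ψp = sInf {v : ℝ | ∃ (xs : Fin n → ℝ) (ys : Fin m → ℝ) (ss : Fin n → ℝ)
      (i : Fin n), KKT H A b c xs ys ss ∧ 0 < xs i ∧ v = xs i})
    (hψppos : 0 < ψp)
    (lam : Fin n → ℝ) (hlam : 0 ≤ lam) (hlam0 : 0 < _root_.enorm lam)
    (hlamub : _root_.enorm lam < min 1 (ψp / (16 * max τp τd)))
    (x : Fin n → ℝ) (y : Fin m → ℝ) (s : Fin n → ℝ)
    (hmem : InSymNbhd H A b c γ lam x s y)
    (hmu : muLam lam x s < min 1 ((ψp / (4 * max τp τd * C2 n γ)) ^ 2))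
    (hprox : ∃ (xs : Fin n → ℝ) (ys : Fin m → ℝ) (ss : Fin n → ℝ),
      KKT H A b c xs ys ss ∧
      _root_.enorm (x - xs) < τp * proxBound γ lam x s ∧
      _root_.enorm (s - ss) < τd * proxBound γ lam x s) :
    ∃ (xs : Fin n → ℝ) (ys : Fin m → ℝ) (ss : Fin n → ℝ),
      KKT H A b c xs ys ss ∧
      {i : Fin n | x i < ψp / 2} = {i : Fin n | xs i = 0} := by
  obtain ⟨xs, ys, ss, hK, hxnear, hsnear⟩ := hprox
  refine ⟨xs, ys, ss, hK, ?_⟩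
  rcases Nat.eq_zero_or_pos n with hn | hn
  · subst hn; ext i; exact i.elim0
  set τ := max τp τd with hτ
  have hτpos : 0 < τ := lt_of_lt_of_le hτp (le_max_left _ _)
  have hC2 : 0 < C2 n γ := by
    have h1 : (1:ℝ) ≤ n := by exact_mod_cast hn
    have h0 : 0 ≤ Real.sqrt ((n:ℝ)/γ) := Real.sqrt_nonneg _
    unfold C2; linarith
  have hmu1 : muLam lam x s < 1 := lt_of_lt_of_le hmu (min_le_left _ _)
  have hsq1 : Real.sqrt (muLam lam x s) ≤ 1 := by
    rw [show (1:ℝ) = Real.sqrt 1 by simp]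
    exact Real.sqrt_le_sqrt hmu1.le
  have hlam1 : _root_.enorm lam ≤ 1 := le_of_lt (lt_of_lt_of_le hlamub (min_le_left _ _))
  have hmaxmu : max (Real.sqrt (muLam lam x s)) 1 = 1 := max_eq_right hsq1
  have hmaxlam : max (_root_.enorm lam) 1 = 1 := max_eq_right hlam1
  have hsqlt : Real.sqrt (muLam lam x s) < ψp / (4 * τ * C2 n γ) := by
    rw [Real.sqrt_lt' (by positivity)]
    exact lt_of_lt_of_le hmu (min_le_right _ _)
  have h1 : C2 n γ * Real.sqrt (muLam lam x s) < ψp / (4 * τ) := by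
    calc C2 n γ * Real.sqrt (muLam lam x s)
        < C2 n γ * (ψp / (4 * τ * C2 n γ)) := (mul_lt_mul_iff_right₀ hC2).mpr hsqlt
      _ = ψp / (4 * τ) := by field_simp
  have h2 : 4 * _root_.enorm lam < ψp / (4 * τ) := by
    have hl := lt_of_lt_of_le hlamub (min_le_right _ _)
    have he : 4 * (ψp / (16 * τ)) = ψp / (4 * τ) := by field_simp; ring
    linarith
  have hpbeq : proxBound γ lam x s = C2 n γ * Real.sqrt (muLam lam x s) + 4 * _root_.enorm lam := by
    unfold proxBound; rw [hmaxmu, hmaxlam]; ring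
  have hprox_lt : τ * proxBound γ lam x s < ψp / 2 := by
    have hpb : proxBound γ lam x s < ψp / (2 * τ) := by
      rw [hpbeq]
      have : ψp / (4 * τ) + ψp / (4 * τ) = ψp / (2 * τ) := by field_simp; ring
      linarith
    calc τ * proxBound γ lam x s < τ * (ψp / (2 * τ)) := (mul_lt_mul_iff_right₀ hτpos).mpr hpb
      _ = ψp / 2 := by field_simp
  have hpbnn : 0 ≤ proxBound γ lam x s := by
    rw [hpbeq]
    have := Real.sqrt_nonneg (muLam lam x s)
    have : 0 ≤ _root_.enorm lam := Real.sqrt_nonneg _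
    unfold _root_.enorm at *
    positivity
  have hxb : ∀ i, |x i - xs i| < ψp / 2 := by
    intro i
    have h3 : |x i - xs i| ≤ _root_.enorm (x - xs) := by
      have := abs_apply_le_enorm (x - xs) i
      simpa using this
    have h4 : τp * proxBound γ lam x s ≤ τ * proxBound γ lam x s :=
      mul_le_mul_of_nonneg_right (le_max_left _ _) hpbnn
    linarith
  have hlb : ∀ j, 0 < xs j → ψp ≤ xs j := by
    intro j hj
    rw [hψp]
    apply csInf_le
    · refine ⟨0, fun v hv => ?_⟩
      obtain ⟨xs', ys', ss', i, _, hpos, rfl⟩ := hv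
      exact hpos.le
    · exact ⟨xs, ys, ss, j, hK, hj, rfl⟩
  ext i
  simp only [Set.mem_setOf_eq]
  constructor
  · intro hxi
    by_contra h0
    have hpos : 0 < xs i := lt_of_le_of_ne (hK.2.2.2.1 i) (Ne.symm h0)
    have hli := hlb i hpos
    have := abs_lt.mp (hxb i)
    linarith [this.1]
  · intro h0
    have := abs_lt.mp (hxb i)
    rw [h0] at this
    linarith [this.2]
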